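/- Let X be a measurable space with a measure μ and a probability measure ν. Let 𝒮 be a finite index set, 𝓜 = (M_i)_{i ∈ 𝒮} a family of measurable sets with 0 < μ(M_i) < ∞, and 𝓝 = (N_i)_{i ∈ 𝒮} a family of pairwise disjoint measurable sets with Σ_{i ∈ 𝒮} ν(N_i) = 1. Let P = Σ_{i ∈ 𝒮} ν(N_i) · μ(·|M_i), where μ(B|M_i) = μ(B ∩ M_i)/μ(M_i). Fix ε > 0 and a bounded measurable function g : X → ℝ, and suppose that for each i ∈ 𝒮 there exists x_i ∈ M_i such that |g(y) − g(x_i)| < ε/2 for all y ∈ M_i ∪ N_i. Then |∫ g dν − ∫ g dP| < ε. -/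

import Mathlib

open MeasureTheory Filter Topology Set
open scoped ENNReal ProbabilityTheory

/-- Let `X` be a measurable space with a measure `μ` and a probability
measure `ν`. Let `𝒮` be a finite index set, `(M i)` measurable sets with
`0 < μ (M i) < ∞`, `(N i)` pairwise disjoint measurable sets with `Σ_i ν (N i) = 1`, and
`P = Σ_i ν (N i) • μ(·|M i)`. If `g` is a bounded measurable function such that for each
`i` there is `x_i ∈ M i` with `|g y − g x_i| < ε/2` for all `y ∈ M i ∪ N i`, then
`|∫ g dν − ∫ g dP| < ε`. -/
theorem stmt_15 {X : Type*} [MeasurableSpace X]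
    (μ : Measure X) (ν : Measure X) [IsProbabilityMeasure ν]
    {ι : Type*} [Fintype ι]
    (M N : ι → Set X)
    (hMmeas : ∀ i, MeasurableSet (M i))
    (hMpos : ∀ i, 0 < μ (M i)) (hMfin : ∀ i, μ (M i) < ⊤)
    (hNmeas : ∀ i, MeasurableSet (N i))
    (hNdisj : ∀ i j, i ≠ j → Disjoint (N i) (N j))
    (hNsum : ∑ i, ν (N i) = 1)
    (ε : ℝ) (hε : 0 < ε)
    (g : X → ℝ) (hg : Measurable g) (Mg : ℝ) (hgb : ∀ x, |g x| ≤ Mg)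
    (hosc : ∀ i, ∃ x ∈ M i, ∀ y ∈ M i ∪ N i, |g y - g x| < ε / 2) :
    |(∫ x, g x ∂ν) -
        ∫ x, g x ∂(∑ i, (ν (N i)) • ProbabilityTheory.cond μ (M i))| < ε := by
  classical
  choose x hxM hx using hosc
  have hcond : ∀ i, IsProbabilityMeasure (ProbabilityTheory.cond μ (M i)) := fun i =>
    ProbabilityTheory.cond_isProbabilityMeasure_of_finite (hMpos i).ne' (hMfin i).ne
  set w : ι → ℝ := fun i => (ν (N i)).toReal with hwdef
  have hcfin : ∀ i, ν (N i) ≠ ⊤ := fun i => (measure_lt_top ν _).ne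
  have hwnn : ∀ i, 0 ≤ w i := fun i => ENNReal.toReal_nonneg
  have hwsum : ∑ i, w i = 1 := by
    rw [← ENNReal.toReal_sum (fun i _ => hcfin i), hNsum, ENNReal.toReal_one]
  -- integrability of g w.r.t. any finite measure
  have hgint : ∀ (m : Measure X), IsFiniteMeasure m → Integrable g m := by
    intro m hm
    haveI := hm
    exact (integrable_const Mg).mono' hg.aestronglyMeasurable
      (Eventually.of_forall fun y => by simpa using hgb y)
  have hν_int : Integrable g ν := hgint ν inferInstance
  have hPint : ∀ i, Integrable g (ProbabilityTheory.cond μ (M i)) := fun i => by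
    haveI := hcond i; exact hgint _ inferInstance
  -- split ∫ g dν
  have hUmeas : MeasurableSet (⋃ i, N i) := MeasurableSet.iUnion hNmeas
  have hUν : ν (⋃ i, N i) = 1 := by
    rw [measure_iUnion (fun i j h => hNdisj i j h) hNmeas, tsum_fintype, hNsum]
  have hcompl : ν (⋃ i, N i)ᶜ = 0 := by
    rw [measure_compl hUmeas (measure_ne_top _ _), hUν, measure_univ, tsub_self]
  have hsplit : ∫ y, g y ∂ν = ∑ i, ∫ y in N i, g y ∂ν := by
    have h1 : ∫ y, g y ∂ν = ∫ y in ⋃ i, N i, g y ∂ν := by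
      rw [← integral_add_compl hUmeas hν_int, setIntegral_measure_zero _ hcompl, add_zero]
    rw [h1, integral_iUnion hNmeas (fun i j h => hNdisj i j h) hν_int.integrableOn,
      tsum_fintype]
  -- compute ∫ g dP
  have hP : ∫ y, g y ∂(∑ i, (ν (N i)) • ProbabilityTheory.cond μ (M i))
      = ∑ i, w i * ∫ y, g y ∂(ProbabilityTheory.cond μ (M i)) := by
    rw [integral_finset_sum_measure (fun i _ => (hPint i).smul_measure (hcfin i))]
    exact Finset.sum_congr rfl fun i _ => by rw [integral_smul_measure, smul_eq_mul]
  -- bound on the N-part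
  have hA : ∀ i, |(∫ y in N i, g y ∂ν) - w i * g (x i)| ≤ w i * (ε / 2) := by
    intro i
    have h1 : ∫ y in N i, g (x i) ∂ν = w i * g (x i) := by
      rw [setIntegral_const, smul_eq_mul]
      rfl
    have h2 : (∫ y in N i, g y ∂ν) - w i * g (x i)
        = ∫ y in N i, (g y - g (x i)) ∂ν := by
      rw [integral_sub hν_int.integrableOn (integrable_const _), h1]
    rw [h2]
    have := norm_setIntegral_le_of_norm_le_const (measure_lt_top ν (N i))
      (f := fun y => g y - g (x i)) (C := ε / 2)
      (fun y hy => by simpa [Real.norm_eq_abs] using (hx i y (Or.inr hy)).le)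
    rw [Real.norm_eq_abs] at this
    change _ ≤ ε / 2 * w i at this
    linarith [this, mul_comm (ε / 2) (w i)]
  -- a.e. membership in M i for the conditional measure
  have haeM : ∀ i, ∀ᵐ y ∂(ProbabilityTheory.cond μ (M i)), y ∈ M i := by
    intro i
    have h0 : (ProbabilityTheory.cond μ (M i)) (M i)ᶜ = 0 := by
      rw [ProbabilityTheory.cond_apply (hMmeas i), Set.inter_compl_self, measure_empty,
        mul_zero]
    exact ae_iff.2 h0
  set δ : ι → ℝ := fun i => ∫ y, |g y - g (x i)| ∂(ProbabilityTheory.cond μ (M i)) with hδdef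
  have hfint : ∀ i, Integrable (fun y => |g y - g (x i)|) (ProbabilityTheory.cond μ (M i)) :=
    fun i => by
      haveI := hcond i
      exact ((hPint i).sub (integrable_const _)).abs
  have hδnn : ∀ i, 0 ≤ δ i := fun i => integral_nonneg fun y => abs_nonneg _
  have hδle : ∀ i, δ i ≤ ε / 2 := by
    intro i
    haveI := hcond i
    calc δ i ≤ ∫ _, ε / 2 ∂(ProbabilityTheory.cond μ (M i)) :=
          integral_mono_ae (hfint i) (integrable_const _)
            ((haeM i).mono fun y hy => (hx i y (Or.inl hy)).le)
      _ = ε / 2 := by simp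
  -- bound on the M-part
  have hB : ∀ i, |g (x i) - ∫ y, g y ∂(ProbabilityTheory.cond μ (M i))| ≤ δ i := by
    intro i
    haveI := hcond i
    have h1 : g (x i) - ∫ y, g y ∂(ProbabilityTheory.cond μ (M i))
        = ∫ y, (g (x i) - g y) ∂(ProbabilityTheory.cond μ (M i)) := by
      rw [integral_sub (integrable_const _) (hPint i), integral_const]
      simp
    rw [h1]
    calc |∫ y, (g (x i) - g y) ∂(ProbabilityTheory.cond μ (M i))|
        ≤ ∫ y, |g (x i) - g y| ∂(ProbabilityTheory.cond μ (M i)) := by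
          simpa [Real.norm_eq_abs] using
            norm_integral_le_integral_norm (μ := ProbabilityTheory.cond μ (M i))
              (fun y => g (x i) - g y)
      _ = δ i := by
          simp only [hδdef]
          exact integral_congr_ae (Eventually.of_forall fun y => abs_sub_comm _ _)
  -- pick an index with positive weight
  have hex : ∃ i₀, 0 < w i₀ := by
    by_contra h
    push_neg at h
    have : ∑ i, w i = 0 := Finset.sum_eq_zero fun i _ => le_antisymm (h i) (hwnn i)
    rw [hwsum] at this
    norm_num at this
  obtain ⟨i₀, hw0⟩ := hex
  -- strict bound for δ i₀
  have hδlt : δ i₀ < ε / 2 := by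
    haveI := hcond i₀
    set m := ProbabilityTheory.cond μ (M i₀)
    set h : X → ℝ := fun y => ε / 2 - |g y - g (x i₀)| with hhdef
    have hhint : Integrable h m := (integrable_const _).sub (hfint i₀)
    have hhpos : ∀ᵐ y ∂m, 0 < h y :=
      (haeM i₀).mono fun y hy => by
        have := hx i₀ y (Or.inl hy); simp only [hhdef]; linarith
    have hpos : 0 < ∫ y, h y ∂m := by
      rw [integral_pos_iff_support_of_nonneg_ae (hhpos.mono fun y hy => hy.le) hhint]
      have hnull : m {y | 0 < h y}ᶜ = 0 := by
        have := ae_iff.1 hhpos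
        simpa [Set.compl_setOf] using this
      have hle : (1 : ℝ≥0∞) ≤ m {y | 0 < h y} := by
        have := measure_union_le (μ := m) {y | 0 < h y} {y | 0 < h y}ᶜ
        rwa [Set.union_compl_self, measure_univ, hnull, add_zero] at this
      have hsub : {y | 0 < h y} ⊆ Function.support h :=
        fun y hy => ne_of_gt hy
      calc (0 : ℝ≥0∞) < 1 := zero_lt_one
        _ ≤ m {y | 0 < h y} := hle
        _ ≤ m (Function.support h) := measure_mono hsub
    have hval : ∫ y, h y ∂m = ε / 2 - δ i₀ := by
      rw [hhdef]
      rw [integral_sub (integrable_const _) (hfint i₀), integral_const]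
      simp [hδdef]
    linarith [hval ▸ hpos]
  -- combine
  have key : ∀ i, |(∫ y in N i, g y ∂ν) - w i * ∫ y, g y ∂(ProbabilityTheory.cond μ (M i))|
      ≤ w i * (ε / 2) + w i * δ i := by
    intro i
    calc |(∫ y in N i, g y ∂ν) - w i * ∫ y, g y ∂(ProbabilityTheory.cond μ (M i))|
        ≤ |(∫ y in N i, g y ∂ν) - w i * g (x i)|
          + |w i * g (x i) - w i * ∫ y, g y ∂(ProbabilityTheory.cond μ (M i))| :=
          abs_sub_le _ _ _
      _ ≤ w i * (ε / 2) + w i * δ i := by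
          refine add_le_add (hA i) ?_
          rw [← mul_sub, abs_mul, abs_of_nonneg (hwnn i)]
          exact mul_le_mul_of_nonneg_left (hB i) (hwnn i)
  rw [hsplit, hP, ← Finset.sum_sub_distrib]
  calc |∑ i, ((∫ y in N i, g y ∂ν) - w i * ∫ y, g y ∂(ProbabilityTheory.cond μ (M i)))|
      ≤ ∑ i, |(∫ y in N i, g y ∂ν) - w i * ∫ y, g y ∂(ProbabilityTheory.cond μ (M i))| :=
        Finset.abs_sum_le_sum_abs _ _
    _ < ∑ i, w i * ε := by
        refine Finset.sum_lt_sum (fun i _ => le_trans (key i) (by nlinarith [hδle i, hwnn i]))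
          ⟨i₀, Finset.mem_univ _, lt_of_le_of_lt (key i₀) (by nlinarith [hδlt])⟩
    _ = ε := by rw [← Finset.sum_mul, hwsum, one_mul]
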